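/- Let s ≥ 1 and 0 ≤ j ≤ s−1 be integers and let p be an (s,j)-Hermite polynomial. Then there exists a real polynomial g of degree at most s−1 all of whose coefficients are nonnegative such that p(x) = g(x)·(1−x)^s for all x ∈ ℝ. -/

import Mathlib

/-- A real polynomial `p` is an `(s,j)`-Hermite polynomial if `deg p ≤ 2s-1` and, for
every `0 ≤ k ≤ s-1`, `p⁽ᵏ⁾(0) = δ_{j,k}` and `p⁽ᵏ⁾(1) = 0`. -/
def IsHermitePoly (s j : ℕ) (p : Polynomial ℝ) : Prop :=
  p.natDegree ≤ 2 * s - 1 ∧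
    ∀ k < s, (Polynomial.derivative^[k] p).eval 0 = (if j = k then (1 : ℝ) else 0) ∧
      (Polynomial.derivative^[k] p).eval 1 = 0

/-- A real polynomial `q` is an `(s,j)`-dual Hermite polynomial if `deg q ≤ 2s-1` and, for
every `0 ≤ k ≤ s-1`, `q⁽ᵏ⁾(0) = 0` and `q⁽ᵏ⁾(1) = δ_{j,k}`. -/
def IsDualHermitePoly (s j : ℕ) (q : Polynomial ℝ) : Prop :=
  q.natDegree ≤ 2 * s - 1 ∧
    ∀ k < s, (Polynomial.derivative^[k] q).eval 0 = 0 ∧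
      (Polynomial.derivative^[k] q).eval 1 = (if j = k then (1 : ℝ) else 0)

open Polynomial

lemma deriv_eval_eq (p : ℝ[X]) (a : ℝ) (k : ℕ) :
    (derivative^[k] p).eval a = (k.factorial : ℝ) * (taylor a p).coeff k := by
  rw [taylor_coeff, ← factorial_smul_hasseDeriv (R := ℝ) k]
  simp [nsmul_eq_mul]

lemma taylor_pow' (a : ℝ) (q : ℝ[X]) (s : ℕ) :
    taylor a (q ^ s) = (taylor a q) ^ s := by
  simp only [taylor_apply, pow_comp]

lemma dvd_of_derivs (p : ℝ[X]) (a : ℝ) (s : ℕ)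
    (h : ∀ k < s, (derivative^[k] p).eval a = 0) : (X - C a) ^ s ∣ p := by
  have h1 : (X : ℝ[X]) ^ s ∣ taylor a p := by
    rw [X_pow_dvd_iff]
    intro k hk
    have h2 := h k hk
    rw [deriv_eval_eq] at h2
    have hfac : (k.factorial : ℝ) ≠ 0 := Nat.cast_ne_zero.mpr k.factorial_ne_zero
    exact (mul_eq_zero.mp h2).resolve_left hfac
  obtain ⟨q, hq⟩ := h1
  refine ⟨taylor (-a) q, ?_⟩
  have h3 : p = taylor (-a) (taylor a p) := by rw [taylor_taylor]; simp
  rw [h3, hq, taylor_mul, taylor_pow', taylor_X]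
  congr 2
  rw [map_neg, sub_eq_add_neg]

lemma derivs_of_dvd (p : ℝ[X]) (a : ℝ) (s : ℕ) (hd : (X - C a) ^ s ∣ p) :
    ∀ k < s, (derivative^[k] p).eval a = 0 := by
  intro k hk
  obtain ⟨q, hq⟩ := hd
  rw [deriv_eval_eq, hq, taylor_mul, taylor_pow']
  have h1 : taylor a (X - C a) = (X : ℝ[X]) := by
    rw [map_sub, taylor_X, taylor_C]; ring
  rw [h1, X_pow_dvd_iff.mp (dvd_mul_right _ _) k hk, mul_zero]

lemma key_sum (d m : ℕ) :
    ∑ ab ∈ Finset.HasAntidiagonal.antidiagonal m,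
      (((d + ab.1).choose d : ℝ)) * (((1 : ℝ[X]) - X) ^ (d + 1)).coeff ab.2 =
      if m = 0 then 1 else 0 := by
  have h := PowerSeries.mk_add_choose_mul_one_sub_pow_eq_one ℝ d
  have h2 := congrArg (PowerSeries.coeff (R := ℝ) m) h
  rw [PowerSeries.coeff_mul, PowerSeries.coeff_one] at h2
  rw [← h2]
  apply Finset.sum_congr rfl
  intro ab _
  congr 1
  · rw [PowerSeries.coeff_mk]
  · rw [← Polynomial.coeff_coe, Polynomial.coe_pow, Polynomial.coe_sub,
      Polynomial.coe_one, Polynomial.coe_X]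

lemma eq_zero_of_hermite_conds (s : ℕ) (hs : 1 ≤ s) (q : ℝ[X])
    (hdeg : q.natDegree ≤ 2 * s - 1)
    (h0 : ∀ k < s, (derivative^[k] q).eval 0 = 0)
    (h1 : ∀ k < s, (derivative^[k] q).eval 1 = 0) : q = 0 := by
  by_contra hq
  have d0 : (X - C (0:ℝ)) ^ s ∣ q := dvd_of_derivs q 0 s h0
  have d1 : (X - C (1:ℝ)) ^ s ∣ q := dvd_of_derivs q 1 s h1
  have hcop : IsCoprime (X - C (0:ℝ)) (X - C (1:ℝ)) := by
    refine ⟨1, -1, by ring_nf; simp⟩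
  have hdvd : (X - C (0:ℝ)) ^ s * (X - C (1:ℝ)) ^ s ∣ q :=
    (hcop.pow).mul_dvd d0 d1
  have hle := natDegree_le_of_dvd hdvd hq
  rw [natDegree_mul (pow_ne_zero _ (X_sub_C_ne_zero 0)) (pow_ne_zero _ (X_sub_C_ne_zero 1)),
    natDegree_pow, natDegree_pow, natDegree_X_sub_C, natDegree_X_sub_C] at hle
  omega

/-- an `(s,j)`-Hermite polynomial factors as `p(x) = g(x)(1-x)^s` with `g`
a polynomial of degree at most `s-1` with nonnegative coefficients. -/
theorem hermitePoly_factorization (s j : ℕ) (hs : 1 ≤ s) (hj : j ≤ s - 1)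
    (p : Polynomial ℝ) (hp : IsHermitePoly s j p) :
    ∃ g : Polynomial ℝ, g.natDegree ≤ s - 1 ∧ (∀ k : ℕ, 0 ≤ g.coeff k) ∧
      ∀ x : ℝ, p.eval x = g.eval x * (1 - x) ^ s := by
  obtain ⟨d, rfl⟩ : ∃ d, s = d + 1 := ⟨s - 1, by omega⟩
  have hjd : j ≤ d := by omega
  set F : ℝ[X] := ∑ i ∈ Finset.range (d + 1 - j), C ((d + i).choose d : ℝ) * X ^ i with hFdef
  set B : ℝ[X] := (1 - X) ^ (d + 1) with hBdef
  set g₀ : ℝ[X] := C ((j.factorial : ℝ)⁻¹) * (X ^ j * F) with hg₀def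
  -- coefficients of F
  have hF : ∀ a, F.coeff a = if a < d + 1 - j then ((d + a).choose d : ℝ) else 0 := by
    intro a
    rw [hFdef, finset_sum_coeff]
    simp only [coeff_C_mul, coeff_X_pow, mul_ite, mul_one, mul_zero]
    rw [Finset.sum_ite_eq (Finset.range (d + 1 - j)) a (fun i => ((d + i).choose d : ℝ))]
    simp [Finset.mem_range]
  -- coefficients of F * B
  have hFB : ∀ m, m < d + 1 - j → (F * B).coeff m = if m = 0 then 1 else 0 := by
    intro m hm
    rw [coeff_mul, ← key_sum d m]
    apply Finset.sum_congr rfl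
    intro ab hab
    rw [Finset.HasAntidiagonal.mem_antidiagonal] at hab
    rw [hF, if_pos (by omega)]
  -- low coefficients of g₀ * B
  have hcoeff : ∀ k, k < d + 1 → (g₀ * B).coeff k =
      if j = k then (j.factorial : ℝ)⁻¹ else 0 := by
    intro k hk
    have hrw : g₀ * B = C ((j.factorial : ℝ)⁻¹) * ((F * B) * X ^ j) := by
      rw [hg₀def]; ring
    rw [hrw, coeff_C_mul, coeff_mul_X_pow']
    by_cases hjk : j ≤ k
    · rw [if_pos hjk, hFB (k - j) (by omega)]
      by_cases hk0 : j = k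
      · rw [if_pos (by omega), if_pos hk0, mul_one]
      · rw [if_neg (by omega), if_neg hk0, mul_zero]
    · rw [if_neg hjk, if_neg (by omega), mul_zero]
  -- degree bounds
  have hdegF : F.natDegree ≤ d - j := by
    apply natDegree_sum_le_of_forall_le
    intro i hi
    rw [Finset.mem_range] at hi
    calc (C ((d + i).choose d : ℝ) * X ^ i).natDegree
        ≤ ((X : ℝ[X]) ^ i).natDegree := natDegree_C_mul_le _ _
      _ = i := natDegree_X_pow i
      _ ≤ d - j := by omega
  have hdegg : g₀.natDegree ≤ d := by
    rw [hg₀def]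
    refine (natDegree_C_mul_le _ _).trans ?_
    refine (natDegree_mul_le).trans ?_
    rw [natDegree_X_pow]
    omega
  have hdegB : B.natDegree ≤ d + 1 := by
    rw [hBdef]
    refine (natDegree_pow_le).trans ?_
    have : ((1 : ℝ[X]) - X).natDegree ≤ 1 := by
      refine (natDegree_sub_le _ _).trans ?_
      simp
    nlinarith
  -- derivatives of g₀ * B at 1 vanish
  have hder1 : ∀ k < d + 1, (derivative^[k] (g₀ * B)).eval 1 = 0 := by
    apply derivs_of_dvd
    have h1 : (X - C (1:ℝ)) ∣ (1 - X) := ⟨-1, by rw [map_one]; ring⟩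
    exact Dvd.dvd.mul_left (pow_dvd_pow_of_dvd h1 (d + 1)) g₀
  -- derivatives of g₀ * B at 0
  have hder0 : ∀ k < d + 1, (derivative^[k] (g₀ * B)).eval 0 =
      if j = k then (1:ℝ) else 0 := by
    intro k hk
    rw [deriv_eval_eq, taylor_zero, hcoeff k hk]
    by_cases hjk : j = k
    · subst hjk
      rw [if_pos rfl, if_pos rfl]
      field_simp
    · rw [if_neg hjk, if_neg hjk, mul_zero]
  -- uniqueness: p = g₀ * B
  obtain ⟨hpdeg, hpcond⟩ := hp
  have hpq : p = g₀ * B := by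
    rw [← sub_eq_zero]
    apply eq_zero_of_hermite_conds (d + 1) (by omega)
    · refine (natDegree_sub_le _ _).trans ?_
      refine max_le hpdeg ?_
      refine (natDegree_mul_le).trans ?_
      omega
    · intro k hk
      rw [Polynomial.iterate_derivative_sub, eval_sub, (hpcond k hk).1, hder0 k hk, sub_self]
    · intro k hk
      rw [Polynomial.iterate_derivative_sub, eval_sub, (hpcond k hk).2, hder1 k hk, sub_self]
  refine ⟨g₀, by simpa using hdegg, ?_, ?_⟩
  · intro k
    rw [hg₀def, coeff_C_mul, (commute_X_pow F j).eq, coeff_mul_X_pow']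
    have h1 : (0:ℝ) ≤ (j.factorial : ℝ)⁻¹ := by positivity
    split_ifs with h
    · rw [hF]
      split_ifs
      · positivity
      · simp
    · simp
  · intro x
    rw [hpq, eval_mul]
    congr 1
    rw [hBdef, eval_pow, eval_sub, eval_one, eval_X]
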